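/- Let Λ be an even lattice. The assignment N ↦ N/Λ is a bijection between the set of even overlattices Λ ⊆ N ⊆ Λ ⊗ ℚ of finite index (with the form extended ℚ-bilinearly) and the set of isotropic subgroups H ⊆ A_Λ of the discriminant group (i.e. subgroups on which the discriminant quadratic form vanishes). In particular, for every even overlattice N of finite index, N embeds naturally in the dual lattice Λ^∨ and N/Λ is isotropic in A_Λ, and conversely every isotropic subgroup H ⊆ A_Λ arises as N/Λ for a unique such overlattice N (the preimage of H in Λ^∨). -/

import Mathlib

open Matrix

section

variable (n : ℕ) (M : Matrix (Fin n) (Fin n) ℤ)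

/-- The lattice `Λ = ℤⁿ` inside `Λ ⊗ ℚ = ℚⁿ`. -/
def intLat : AddSubgroup (Fin n → ℚ) := ((Int.castAddHom ℚ).compLeft (Fin n)).range

/-- The ℚ-bilinear extension of the bilinear form with Gram matrix `M` to `Λ ⊗ ℚ`. -/
def bilinQ (x y : Fin n → ℚ) : ℚ := x ⬝ᵥ ((M.map (Int.cast : ℤ → ℚ)) *ᵥ y)

/-- The dual lattice `Λ^∨ = {x ∈ Λ ⊗ ℚ : (x, Λ) ⊆ ℤ}`. -/
def dualLat : AddSubgroup (Fin n → ℚ) where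
  carrier := {x | ∀ y ∈ intLat n, ∃ k : ℤ, bilinQ n M x y = (k : ℚ)}
  zero_mem' := fun y _ => ⟨0, by simp [bilinQ]⟩
  add_mem' := by
    intro a b ha hb y hy
    obtain ⟨k, hk⟩ := ha y hy
    obtain ⟨l, hl⟩ := hb y hy
    exact ⟨k + l, by simp [bilinQ, add_dotProduct] at *; rw [hk, hl]⟩
  neg_mem' := by
    intro a ha y hy
    obtain ⟨k, hk⟩ := ha y hy
    exact ⟨-k, by simp [bilinQ, neg_dotProduct] at *; rw [hk]⟩

/-- The quotient map `Λ ⊗ ℚ → (Λ ⊗ ℚ)/Λ`; the discriminant group `A_Λ = Λ^∨/Λ` is the image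
of the dual lattice under this map. -/
def quotMap : (Fin n → ℚ) →+ (Fin n → ℚ) ⧸ intLat n := QuotientAddGroup.mk' (intLat n)

/-- The set of even overlattices `Λ ⊆ N ⊆ Λ ⊗ ℚ` of finite index: subgroups of `Λ ⊗ ℚ`
containing `Λ` with finite quotient `N/Λ`, on which the ℚ-bilinear extension of the form is
integral and even. -/
def overLattices : Set (AddSubgroup (Fin n → ℚ)) :=
  {N | intLat n ≤ N ∧ Finite ↥(N.map (quotMap n)) ∧
    (∀ x ∈ N, ∀ y ∈ N, ∃ k : ℤ, bilinQ n M x y = (k : ℚ)) ∧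
    (∀ x ∈ N, ∃ k : ℤ, bilinQ n M x x = 2 * (k : ℚ))}

/-- The set of isotropic subgroups of the discriminant group `A_Λ = Λ^∨/Λ`: subgroups of
`(Λ ⊗ ℚ)/Λ` contained in `Λ^∨/Λ` on which the discriminant quadratic form
`q([x]) = (x,x) mod 2ℤ` vanishes. -/
lemma mem_intLat {x : Fin n → ℚ} : x ∈ intLat n ↔ ∃ v : Fin n → ℤ, (fun i => ((v i : ℚ))) = x := by
  simp [intLat, AddMonoidHom.mem_range, AddMonoidHom.compLeft, Function.comp_def, funext_iff]

lemma bilinQ_int (v w : Fin n → ℤ) :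
    bilinQ n M (fun i => ((v i : ℚ))) (fun i => ((w i : ℚ))) = ((v ⬝ᵥ (M *ᵥ w) : ℤ) : ℚ) := by
  simp [bilinQ, dotProduct, mulVec, Matrix.map_apply, Finset.mul_sum]

lemma bilinQ_symm (hsymm : Mᵀ = M) (x y : Fin n → ℚ) : bilinQ n M x y = bilinQ n M y x := by
  have h : (M.map (Int.cast : ℤ → ℚ))ᵀ = M.map (Int.cast : ℤ → ℚ) := by
    rw [← Matrix.transpose_map, hsymm]
  rw [bilinQ, bilinQ, Matrix.dotProduct_mulVec]
  nth_rewrite 1 [← h]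
  rw [Matrix.vecMul_transpose, dotProduct_comm]

lemma bilinQ_add_left (x y z : Fin n → ℚ) :
    bilinQ n M (x + y) z = bilinQ n M x z + bilinQ n M y z := by
  simp [bilinQ, add_dotProduct]

lemma bilinQ_add_right (x y z : Fin n → ℚ) :
    bilinQ n M x (y + z) = bilinQ n M x y + bilinQ n M x z := by
  simp [bilinQ, Matrix.mulVec_add, dotProduct_add]

lemma intLat_le_dualLat : intLat n ≤ dualLat n M := by
  intro x hx y hy
  obtain ⟨v, hv⟩ := (mem_intLat n).mp hx
  obtain ⟨w, hw⟩ := (mem_intLat n).mp hy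
  exact ⟨v ⬝ᵥ (M *ᵥ w), by rw [← hv, ← hw]; exact bilinQ_int n M v w⟩

lemma ker_quotMap : (quotMap n).ker = intLat n := QuotientAddGroup.ker_mk' _

lemma quotMap_eq {x y : Fin n → ℚ} (h : x - y ∈ intLat n) : quotMap n x = quotMap n y := by
  have : quotMap n (x - y) = 0 := (QuotientAddGroup.eq_zero_iff _).mpr h
  rw [map_sub, sub_eq_zero] at this
  exact this

lemma mem_of_quotMap_eq {N : AddSubgroup (Fin n → ℚ)} (hΛ : intLat n ≤ N)
    {x y : Fin n → ℚ} (hy : y ∈ N) (h : quotMap n x = quotMap n y) : x ∈ N := by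
  have hxy : x - y ∈ intLat n := by
    have : quotMap n (x - y) = 0 := by rw [map_sub, h, sub_self]
    exact (QuotientAddGroup.eq_zero_iff _).mp this
  have := N.add_mem (hΛ hxy) hy
  simpa using this

/-- Each element of the dual lattice has `M *ᵥ x` integral. -/
lemma dual_mulVec (hsymm : Mᵀ = M) {x : Fin n → ℚ} (hx : x ∈ dualLat n M) :
    ∃ w : Fin n → ℤ, (M.map (Int.cast : ℤ → ℚ)) *ᵥ x = fun i => ((w i : ℚ)) := by
  have key : ∀ i : Fin n, ∃ k : ℤ, ((M.map (Int.cast : ℤ → ℚ)) *ᵥ x) i = (k : ℚ) := by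
    intro i
    have hmem : (fun j => (((Pi.single i 1 : Fin n → ℤ) j : ℚ))) ∈ intLat n :=
      (mem_intLat n).mpr ⟨Pi.single i 1, rfl⟩
    obtain ⟨k, hk⟩ := hx _ hmem
    refine ⟨k, ?_⟩
    rw [← hk, bilinQ]
    have h1 : (fun j => (((Pi.single i 1 : Fin n → ℤ) j : ℚ))) = Pi.single i (1:ℚ) := by
      ext j
      by_cases hj : j = i <;> simp [Pi.single_apply, hj]
    rw [h1, Matrix.mulVec_single, mulVec, dotProduct]
    simp only [MulOpposite.op_one, one_smul, dotProduct, Matrix.col_apply]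
    congr 1
    ext j
    rw [mul_comm]
    congr 1
    conv_lhs => rw [← hsymm]
    simp [Matrix.map_apply]
  choose w hw using key
  exact ⟨w, funext hw⟩

lemma mulVec_cast (A : Matrix (Fin n) (Fin n) ℤ) (w : Fin n → ℤ) :
    (A.map (Int.cast : ℤ → ℚ)) *ᵥ (fun i => ((w i : ℚ))) = fun i => (((A *ᵥ w) i : ℚ)) := by
  ext i
  simp [mulVec, dotProduct, Matrix.map_apply]

lemma dual_denom (hsymm : Mᵀ = M) (hnd : M.det ≠ 0) {x : Fin n → ℚ} (hx : x ∈ dualLat n M) :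
    ∃ c : Fin n → ℤ, ∀ i, x i = (c i : ℚ) / (M.det : ℚ) := by
  obtain ⟨w, hw⟩ := dual_mulVec n M hsymm hx
  refine ⟨M.adjugate *ᵥ w, fun i => ?_⟩
  have hd : ((M.det : ℚ)) ≠ 0 := Int.cast_ne_zero.mpr hnd
  have hdet : ((M.map (Int.cast : ℤ → ℚ)).det) = (M.det : ℚ) := by
    have := (RingHom.map_det (Int.castRingHom ℚ) M).symm
    simpa only [RingHom.mapMatrix_apply, Int.coe_castRingHom, eq_intCast] using this
  have hadj : (M.map (Int.cast : ℤ → ℚ)).adjugate = M.adjugate.map (Int.cast : ℤ → ℚ) := by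
    have := RingHom.map_adjugate (Int.castRingHom ℚ) M
    simp only [RingHom.mapMatrix_apply, Int.coe_castRingHom] at this
    exact this.symm
  have key : (M.det : ℚ) • x = fun i => (((M.adjugate *ᵥ w) i : ℚ)) := by
    rw [← mulVec_cast n, ← hadj, ← hw, Matrix.mulVec_mulVec, Matrix.adjugate_mul, hdet,
      Matrix.smul_mulVec, Matrix.one_mulVec]
  have := congrFun key i
  simp only [Pi.smul_apply, smul_eq_mul] at this
  field_simp
  rw [mul_comm] at this
  exact this

lemma finite_discr (hsymm : Mᵀ = M) (hnd : M.det ≠ 0) :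
    (((dualLat n M).map (quotMap n) : Set ((Fin n → ℚ) ⧸ intLat n))).Finite := by
  set m : ℕ := M.det.natAbs with hm
  have hm0 : 0 < m := Int.natAbs_pos.mpr hnd
  have hS : (Set.range (fun v : Fin n → Fin m =>
      quotMap n (fun i => (((v i : ℕ) : ℚ)) / (M.det : ℚ)))).Finite := Set.finite_range _
  refine hS.subset ?_
  rintro q hq
  obtain ⟨x, hx, rfl⟩ := hq
  obtain ⟨c, hc⟩ := dual_denom n M hsymm hnd hx
  set r : Fin n → ℤ := fun i => c i % (m : ℤ) with hr
  have hr0 : ∀ i, 0 ≤ r i := fun i => Int.emod_nonneg _ (by exact_mod_cast hm0.ne')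
  have hrm : ∀ i, r i < (m : ℤ) := fun i => Int.emod_lt_of_pos _ (by exact_mod_cast hm0)
  refine ⟨fun i => ⟨(r i).toNat, by have := hr0 i; have := hrm i; omega⟩, ?_⟩
  simp only
  have hcast : ∀ i, (((r i).toNat : ℕ) : ℚ) = ((r i : ℚ)) := by
    intro i
    have : (((r i).toNat : ℤ)) = r i := Int.toNat_of_nonneg (hr0 i)
    exact_mod_cast congrArg (Int.cast : ℤ → ℚ) this
  have hdvd : ∀ i, M.det ∣ c i - r i := by
    intro i
    have h1 : (m : ℤ) ∣ c i - r i := Int.dvd_self_sub_of_emod_eq rfl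
    exact dvd_trans (Int.dvd_natAbs.mpr dvd_rfl) h1
  apply quotMap_eq
  rw [mem_intLat n]
  refine ⟨fun i => (r i - c i) / M.det, ?_⟩
  ext i
  obtain ⟨s, hs⟩ := hdvd i
  have hs2 : r i - c i = M.det * (-s) := by linarith
  have hdQ : ((M.det : ℚ)) ≠ 0 := Int.cast_ne_zero.mpr hnd
  have hq : ((c i : ℚ)) - (r i : ℚ) = (M.det : ℚ) * (s : ℚ) := by exact_mod_cast congrArg (Int.cast : ℤ → ℚ) hs
  simp only [Pi.sub_apply, hc i, hcast i, hs2, Int.mul_ediv_cancel_left _ hnd]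
  push_cast [-Int.cast_det]
  field_simp
  linarith


def isotropicSubgroups : Set (AddSubgroup ((Fin n → ℚ) ⧸ intLat n)) :=
  {H | H ≤ (dualLat n M).map (quotMap n) ∧
    ∀ x ∈ dualLat n M, quotMap n x ∈ H → ∃ k : ℤ, bilinQ n M x x = 2 * (k : ℚ)}

/-- Let `Λ` be an even lattice. Every even overlattice `Λ ⊆ N ⊆ Λ ⊗ ℚ` of finite index is
contained in the dual lattice `Λ^∨`, and the assignment `N ↦ N/Λ` is a bijection between
the set of such overlattices and the set of isotropic subgroups of the discriminant group
`A_Λ = Λ^∨/Λ`. -/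
theorem stmt_0 (hsymm : Mᵀ = M) (hnd : M.det ≠ 0)
    (heven : ∀ v : Fin n → ℤ, ∃ k : ℤ, v ⬝ᵥ (M *ᵥ v) = 2 * k) :
    (∀ N ∈ overLattices n M, N ≤ dualLat n M) ∧
    Set.BijOn (fun N : AddSubgroup (Fin n → ℚ) => N.map (quotMap n))
      (overLattices n M) (isotropicSubgroups n M) := by
  have part1 : ∀ N ∈ overLattices n M, N ≤ dualLat n M := by
    rintro N ⟨hΛ, -, hint, -⟩ x hx y hy
    exact hint x hx y (hΛ hy)
  refine ⟨part1, ?_, ?_, ?_⟩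
  · -- MapsTo
    rintro N hN
    obtain ⟨hΛ, hfin, hint, hev⟩ := hN
    refine ⟨AddSubgroup.map_mono (part1 N ⟨hΛ, hfin, hint, hev⟩), ?_⟩
    intro x hxdual hxH
    obtain ⟨y, hyN, hyq⟩ := AddSubgroup.mem_map.mp hxH
    exact hev x (mem_of_quotMap_eq n hΛ hyN hyq.symm)
  · -- InjOn
    intro N₁ h₁ N₂ h₂ heq
    simp only at heq
    have k1 : (N₁.map (quotMap n)).comap (quotMap n) = N₁ := by
      rw [AddSubgroup.comap_map_eq, ker_quotMap, sup_eq_left]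
      exact h₁.1
    have k2 : (N₂.map (quotMap n)).comap (quotMap n) = N₂ := by
      rw [AddSubgroup.comap_map_eq, ker_quotMap, sup_eq_left]
      exact h₂.1
    rw [← k1, ← k2, heq]
  · -- SurjOn
    rintro H ⟨hHle, hHiso⟩
    have hmap : (H.comap (quotMap n)).map (quotMap n) = H := by
      rw [AddSubgroup.map_comap_eq]
      have hr : (quotMap n).range = ⊤ :=
        AddMonoidHom.range_eq_top.mpr (QuotientAddGroup.mk'_surjective _)
      rw [hr, top_inf_eq]
    have hΛN : intLat n ≤ H.comap (quotMap n) := by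
      intro x hx
      have h0 : quotMap n x = 0 := (QuotientAddGroup.eq_zero_iff _).mpr hx
      show quotMap n x ∈ H
      rw [h0]
      exact H.zero_mem
    have hNdual : ∀ x ∈ H.comap (quotMap n), x ∈ dualLat n M := by
      intro x hx
      obtain ⟨y, hy, hyq⟩ := AddSubgroup.mem_map.mp (hHle hx)
      exact mem_of_quotMap_eq n (intLat_le_dualLat n M) hy hyq.symm
    refine ⟨H.comap (quotMap n), ⟨hΛN, ?_, ?_, ?_⟩, hmap⟩
    · rw [hmap]
      have hfin : ((H : Set ((Fin n → ℚ) ⧸ intLat n))).Finite :=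
        (finite_discr n M hsymm hnd).subset (fun x hx => hHle hx)
      exact hfin.to_subtype
    · intro x hx y hy
      have hx' := hNdual x hx
      have hy' := hNdual y hy
      have hxy' : x + y ∈ dualLat n M := (dualLat n M).add_mem hx' hy'
      have hxyH : quotMap n (x + y) ∈ H := by
        rw [map_add]; exact H.add_mem hx hy
      obtain ⟨a, ha⟩ := hHiso (x + y) hxy' hxyH
      obtain ⟨b, hb⟩ := hHiso x hx' hx
      obtain ⟨c, hc⟩ := hHiso y hy' hy
      refine ⟨a - b - c, ?_⟩
      have hexp : bilinQ n M (x + y) (x + y) =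
          bilinQ n M x x + 2 * bilinQ n M x y + bilinQ n M y y := by
        rw [bilinQ_add_left, bilinQ_add_right, bilinQ_add_right, bilinQ_symm n M hsymm y x]
        ring
      push_cast
      rw [hexp, hb, hc] at ha
      linarith
    · intro x hx
      exact hHiso x (hNdual x hx) hx


end
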